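/- Let H : X → Y assign to each x the unique y ∈ Kᗮ with ∃ z, Jx x + Jy y + Jz z = 0, and let H̄ : X → Y × Z assign to each x the unique pair (y,z) orthogonal to ker L (where L : Y × Z → W is L(y,z) = Jy y + Jz z and Y × Z carries the product inner product ‖(y,z)‖² = ‖y‖² + ‖z‖²) satisfying Jx x + Jy y + Jz z = 0. Then ‖H x‖ ≤ ‖H̄ x‖ for every x ∈ X, and consequently the operator norm of H is at most the operator norm of H̄. (Linearized form of Proposition 1.4: the condition number of solving for y alone is at most the condition number of solving for the pair (y,z).) -/

import Mathlib

/-- Linearized form of Proposition 1.4: if `H x` is the minimum-norm `y` (the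
unique `y ∈ Kᗮ` feasible for `x`) and `H̄ x` is the minimum-norm pair `(y, z)`
(orthogonal to `ker L` for `L (y, z) = Jy y + Jz z`, with the ℓ² product
norm on `Y × Z`), then `‖H x‖ ≤ ‖H̄ x‖` for all `x`, and hence `‖H‖ ≤ ‖H̄‖`. -/
theorem stmt6 {X Y Z W : Type*}
    [NormedAddCommGroup X] [InnerProductSpace ℝ X] [FiniteDimensional ℝ X]
    [NormedAddCommGroup Y] [InnerProductSpace ℝ Y] [FiniteDimensional ℝ Y]
    [NormedAddCommGroup Z] [InnerProductSpace ℝ Z] [FiniteDimensional ℝ Z]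
    [NormedAddCommGroup W] [InnerProductSpace ℝ W] [FiniteDimensional ℝ W]
    (Jx : X →ₗ[ℝ] W) (Jy : Y →ₗ[ℝ] W) (Jz : Z →ₗ[ℝ] W)
    (hfeas : LinearMap.range Jx ≤ LinearMap.range Jy ⊔ LinearMap.range Jz)
    (K : Submodule ℝ Y)
    (hK : K = (LinearMap.ker (Jy.coprod Jz)).map (LinearMap.fst ℝ Y Z))
    (L : WithLp 2 (Y × Z) →ₗ[ℝ] W)
    (hL : ∀ p : WithLp 2 (Y × Z),
      L p = Jy (WithLp.equiv 2 (Y × Z) p).1 + Jz (WithLp.equiv 2 (Y × Z) p).2)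
    (H : X →L[ℝ] Y) (Hbar : X →L[ℝ] WithLp 2 (Y × Z))
    (hH : ∀ x : X, H x ∈ Kᗮ ∧ ∃ z : Z, Jx x + Jy (H x) + Jz z = 0)
    (hHbar : ∀ x : X, Hbar x ∈ (LinearMap.ker L)ᗮ ∧ Jx x + L (Hbar x) = 0) :
    (∀ x : X, ‖H x‖ ≤ ‖Hbar x‖) ∧ ‖H‖ ≤ ‖Hbar‖ := by
  have hpt : ∀ x : X, ‖H x‖ ≤ ‖Hbar x‖ := by
    intro x
    obtain ⟨hmem, z, hz⟩ := hH x
    obtain ⟨_, hb⟩ := hHbar x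
    set p := Hbar x with hp
    set ybar := (WithLp.equiv 2 (Y × Z) p).1 with hy
    set zbar := (WithLp.equiv 2 (Y × Z) p).2 with hzb
    have hfeq : Jx x + Jy ybar + Jz zbar = 0 := by
      rw [hL p, ← add_assoc] at hb; exact hb
    -- ybar - H x ∈ K
    have hdK : ybar - H x ∈ K := by
      rw [hK]
      refine ⟨(ybar - H x, zbar - z), ?_, rfl⟩
      show Jy (ybar - H x) + Jz (zbar - z) = 0
      simp only [map_sub]
      rw [show Jy ybar - Jy (H x) + (Jz zbar - Jz z)
          = (Jx x + Jy ybar + Jz zbar) - (Jx x + Jy (H x) + Jz z) by abel, hfeq, hz,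
        sub_zero]
    have hinner : inner ℝ (ybar - H x) (H x) = (0 : ℝ) :=
      hmem _ hdK
    have h1 : ‖H x‖ ≤ ‖ybar‖ := by
      have : ‖ybar‖ ^ 2 = ‖H x‖ ^ 2 + ‖ybar - H x‖ ^ 2 := by
        have := norm_add_sq_real (H x) (ybar - H x)
        rw [real_inner_comm] at hinner
        simp only [hinner] at this
        simpa [add_sub_cancel] using this
      nlinarith [norm_nonneg (ybar - H x), norm_nonneg (H x), norm_nonneg ybar]
    have h2 : ‖ybar‖ ≤ ‖p‖ := by
      have := WithLp.prod_norm_sq_eq_of_L2 p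
      have hyb : ybar = p.fst := rfl
      rw [← hyb] at this
      nlinarith [norm_nonneg p.snd, norm_nonneg p, norm_nonneg ybar]
    exact h1.trans h2
  refine ⟨hpt, ?_⟩
  refine ContinuousLinearMap.opNorm_le_bound _ (norm_nonneg Hbar) fun x => ?_
  exact (hpt x).trans (Hbar.le_opNorm x)
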